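/- arXiv:2101.07840 — 4 statements merged into one kernel-verified Lean document; each statement's English description precedes it below -/
import Mathlib

section
/- Let p be a prime and k a natural number. If a finite multiset of natural numbers, each of which divides p^k, has sum strictly greater than p^k, then it has a sub-multiset whose sum is exactly p^k. -/
theorem aux_chain_subsum (p : ℕ) (hp : p.Prime) :
    ∀ S : Multiset ℕ, (∀ d ∈ S, ∃ i, d = p ^ i) →
    ∀ n : ℕ, (∀ d ∈ S, d ∣ n) → n ≤ S.sum → ∃ T ≤ S, T.sum = n := by
  intro S
  induction S using Multiset.strongInductionOn with
  | ih S ih =>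
    intro hpow n hdvd hle
    rcases Nat.eq_zero_or_pos n with rfl | hn
    · exact ⟨0, Multiset.zero_le S, rfl⟩
    · -- S is nonempty
      have hS : S ≠ 0 := by
        rintro rfl
        simp at hle; omega
      -- get a maximal element
      obtain ⟨d, hd, hdmax⟩ : ∃ d ∈ S, ∀ e ∈ S, e ≤ d := by
        obtain ⟨d, hd, hmax⟩ := S.toFinset.exists_max_image id
          (by simpa [Multiset.toFinset_nonempty] using hS)
        exact ⟨d, Multiset.mem_toFinset.mp hd,
          fun e he => hmax e (Multiset.mem_toFinset.mpr he)⟩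
      have hdn : d ∣ n := hdvd d hd
      have hdle : d ≤ n := Nat.le_of_dvd hn hdn
      have hsub : S.erase d < S := Multiset.erase_lt.mpr hd
      obtain ⟨T', hT'le, hT'sum⟩ := ih (S.erase d) hsub
        (fun e he => hpow e (Multiset.mem_of_mem_erase he))
        (n - d)
        (by
          intro e he
          have heS := Multiset.mem_of_mem_erase he
          have hed : e ∣ d := by
            obtain ⟨i, rfl⟩ := hpow e heS
            obtain ⟨j, rfl⟩ := hpow d hd
            exact pow_dvd_pow p (Nat.pow_le_pow_iff_right hp.one_lt |>.mp (hdmax _ heS))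
          exact Nat.dvd_sub (hdvd e heS) hed
        )
        (by
          have := Multiset.sum_erase hd
          omega)
      refine ⟨d ::ₘ T', ?_, by simp [hT'sum]; omega⟩
      rw [← Multiset.cons_erase hd]
      exact Multiset.cons_le_cons d hT'le

theorem multiset_sub_sum_eq_prime_pow (p k : ℕ) (hp : p.Prime) (S : Multiset ℕ)
    (hdvd : ∀ d ∈ S, d ∣ p ^ k) (hsum : p ^ k < S.sum) :
    ∃ T ≤ S, T.sum = p ^ k := by
  exact aux_chain_subsum p hp S
    (fun d hd => (Nat.dvd_prime_pow hp).mp (hdvd d hd) |>.imp fun i h => h.2)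
    (p ^ k) hdvd hsum.le
end

section
/- Let G be a finite group of order p^k (p prime) acting on a finite set s with |s| > p^k. Then there exists a G-invariant subset of s of cardinality exactly p^k. -/
open MulAction Finset

section Aux

variable {p k : ℕ} {G : Type*} [Group G] [Fintype G] {X : Type*} [MulAction G X]

private noncomputable def orbF (G : Type*) [Group G] [Fintype G] {X : Type*} [MulAction G X]
    (x : X) : Finset X :=
  @Finset.image _ _ (Classical.decEq X) (· • x) (Finset.univ : Finset G)

private lemma mem_orbF {x y : X} : y ∈ orbF G x ↔ ∃ g : G, g • x = y := by
  simp [orbF]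

private lemma self_mem_orbF (x : X) : x ∈ orbF G x :=
  mem_orbF.mpr ⟨1, one_smul _ _⟩

private lemma smul_mem_orbF {x y : X} (g : G) (hy : y ∈ orbF G x) : g • y ∈ orbF G x := by
  obtain ⟨h, rfl⟩ := mem_orbF.mp hy
  exact mem_orbF.mpr ⟨g * h, mul_smul g h x⟩

private lemma card_orbF_dvd (x : X) : (orbF G x).card ∣ Fintype.card G := by
  classical
  haveI : Fintype (MulAction.orbit G x) := Set.fintypeRange _
  have h := MulAction.card_orbit_mul_card_stabilizer_eq_card_group G x
  have heq : orbF G x = (MulAction.orbit G x).toFinset := by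
    ext y
    simp [mem_orbF, MulAction.mem_orbit_iff]
  have hcard : (orbF G x).card = Fintype.card (MulAction.orbit G x) := by
    rw [heq, Set.toFinset_card]
  rw [hcard]
  exact ⟨_, h.symm⟩

private lemma dvd_of_le_of_dvd_pp (hp : p.Prime) {a b : ℕ} (ha : a ∣ p ^ k) (hb : b ∣ p ^ k)
    (hab : a ≤ b) : a ∣ b := by
  obtain ⟨i, hi, rfl⟩ := (Nat.dvd_prime_pow hp).mp ha
  obtain ⟨j, hj, rfl⟩ := (Nat.dvd_prime_pow hp).mp hb
  exact pow_dvd_pow p ((Nat.pow_le_pow_iff_right hp.one_lt).mp hab)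

private lemma main_aux (hp : p.Prime) (hG : Fintype.card G = p ^ k) :
    ∀ m : ℕ, ∀ s : Finset X, (∀ g : G, ∀ x ∈ s, g • x ∈ s) → m ≤ s.card →
      (∀ x ∈ s, (orbF G x).card ∣ m) →
      ∃ t ⊆ s, t.card = m ∧ ∀ g : G, ∀ x ∈ t, g • x ∈ t := by
  classical
  intro m
  induction m using Nat.strong_induction_on with
  | _ m ih =>
    intro s hinv hm hdvd
    rcases Nat.eq_zero_or_pos m with rfl | hmpos
    · exact ⟨∅, empty_subset s, card_empty, by simp⟩
    · -- s is nonempty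
      have hs : s.Nonempty := card_pos.mp (lt_of_lt_of_le hmpos hm)
      -- pick x maximizing orbit card
      obtain ⟨x, hxs, hxmax⟩ := s.exists_max_image (fun y => (orbF G y).card) hs
      set d := (orbF G x).card with hd
      have hdm : d ∣ m := hdvd x hxs
      have hdpos : 0 < d := card_pos.mpr ⟨x, self_mem_orbF x⟩
      have hdle : d ≤ m := Nat.le_of_dvd hmpos hdm
      have horb_sub : orbF G x ⊆ s := by
        intro y hy
        obtain ⟨g, rfl⟩ := mem_orbF.mp hy
        exact hinv g x hxs
      set s' := s \ orbF G x with hs'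
      have hs'inv : ∀ g : G, ∀ y ∈ s', g • y ∈ s' := by
        intro g y hy
        rw [hs', mem_sdiff] at hy ⊢
        refine ⟨hinv g y hy.1, fun hmem => hy.2 ?_⟩
        have := smul_mem_orbF g⁻¹ hmem
        rwa [inv_smul_smul] at this
      have hcard_s' : s'.card = s.card - d := card_sdiff_of_subset horb_sub
      have hm' : m - d ≤ s'.card := by
        rw [hcard_s']
        exact Nat.sub_le_sub_right hm d
      have hdvd' : ∀ y ∈ s', (orbF G y).card ∣ m - d := by
        intro y hy
        have hys : y ∈ s := (mem_sdiff.mp hy).1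
        refine Nat.dvd_sub (hdvd y hys) ?_
        refine dvd_of_le_of_dvd_pp (k := k) hp ?_ ?_ (hxmax y hys)
        · rw [← hG]; exact card_orbF_dvd y
        · rw [← hG]; exact card_orbF_dvd x
      obtain ⟨t', ht's', ht'card, ht'inv⟩ :=
        ih (m - d) (Nat.sub_lt hmpos hdpos) s' hs'inv hm' hdvd'
      refine ⟨t' ∪ orbF G x, ?_, ?_, ?_⟩
      · exact union_subset (ht's'.trans (sdiff_subset)) horb_sub
      · have hdisj : Disjoint t' (orbF G x) := by
          rw [Finset.disjoint_left]
          intro a ha hb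
          exact (mem_sdiff.mp (ht's' ha)).2 hb
        rw [card_union_of_disjoint hdisj, ht'card, ← hd, Nat.sub_add_cancel hdle]
      · intro g y hy
        rcases mem_union.mp hy with h | h
        · exact mem_union_left _ (ht'inv g y h)
        · exact mem_union_right _ (smul_mem_orbF g h)

end Aux

theorem exists_invariant_subset_card_prime_pow (p k : ℕ) (hp : p.Prime)
    (G : Type*) [Group G] [Fintype G] (hG : Fintype.card G = p ^ k)
    (X : Type*) [MulAction G X] (s : Finset X)
    (hinv : ∀ g : G, ∀ x ∈ s, g • x ∈ s) (hcard : p ^ k < s.card) :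
    ∃ t ⊆ s, t.card = p ^ k ∧ ∀ g : G, ∀ x ∈ t, g • x ∈ t := by
  refine main_aux hp hG (p ^ k) s hinv hcard.le ?_
  intro x hx
  rw [← hG]
  exact card_orbF_dvd x
end

section
/- Suppose f selects, for every finite subset z of a type α with |z| > n (where n ≥ 1), an n-element subset f(z) ⊆ z. Then for every k ∈ ℕ there is a choice function h on the (k·n + 1)-element subsets of α, i.e., h assigns to each subset z with |z| = k·n + 1 an element h(z) ∈ z. -/
theorem selector_to_choice_on_kn_add_one (α : Type*) [Nonempty α] (n k : ℕ) (hn : 1 ≤ n)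
    (f : Finset α → Finset α)
    (hf : ∀ z : Finset α, n < z.card → f z ⊆ z ∧ (f z).card = n) :
    ∃ h : Finset α → α, ∀ z : Finset α, z.card = k * n + 1 → h z ∈ z := by
  classical
  set g : Finset α → Finset α := fun s => s \ f s with hg
  have key : ∀ m : ℕ, ∀ z : Finset α, z.card = m * n + 1 →
      (g^[m] z) ⊆ z ∧ (g^[m] z).card = 1 := by
    intro m
    induction m with
    | zero => intro z hz; simpa using hz
    | succ m ih =>
      intro z hz
      have hlt : n < z.card := by
        rw [hz]; nlinarith
      obtain ⟨hsub, hcard⟩ := hf z hlt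
      have hgz : (g z).card = m * n + 1 := by
        rw [hg]
        simp only
        rw [Finset.card_sdiff_of_subset hsub, hcard, hz]
        have : (m + 1) * n = m * n + n := by ring
        omega
      have := ih (g z) hgz
      rw [Function.iterate_succ_apply]
      exact ⟨this.1.trans (Finset.sdiff_subset), this.2⟩
  refine ⟨fun z => if hz : (g^[k] z).Nonempty then hz.choose else Classical.arbitrary α, ?_⟩
  intro z hz
  obtain ⟨hsub, hcard⟩ := key k z hz
  have hne : (g^[k] z).Nonempty := Finset.card_pos.mp (by omega)
  simp only [dif_pos hne]
  exact hsub hne.choose_spec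
end

section
/- Let m ∈ ℕ be positive, let finite sets Y_1, ..., Y_l be disjoint with |Y_j| = m, and let σ be a permutation acting as a disjoint product of m-cycles, one on each Y_j. Let L ⊆ ⋃ Y_j be such that for each j, L ∩ Y_j is a single orbit of ⟨σ^{m/a_j}⟩ of size a_j, where a_j ∣ m and a_j > 0. Then σ^s(L) = L if and only if m / gcd(a_1,...,a_l) divides s. -/
private lemma perm_pow_mem {α : Type*} (σ : Equiv.Perm α) (Y : Set α)
    (hinv : ∀ x ∈ Y, σ x ∈ Y) : ∀ t : ℕ, ∀ x ∈ Y, (σ ^ t) x ∈ Y := by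
  intro t
  induction t with
  | zero => intro x hx; simpa using hx
  | succ n ih =>
    intro x hx
    rw [pow_succ', Equiv.Perm.mul_apply]
    exact hinv _ (ih x hx)

private lemma perm_minimalPeriod {α : Type*} (σ : Equiv.Perm α) (Y : Set α) (m : ℕ)
    (hm : 0 < m) (hfin : Y.Finite) (hcard : Y.ncard = m)
    (hinv : ∀ x ∈ Y, σ x ∈ Y)
    (htrans : ∀ x ∈ Y, ∀ y ∈ Y, ∃ t : ℕ, (σ ^ t) x = y)
    (x : α) (hx : x ∈ Y) : Function.minimalPeriod ⇑σ x = m := by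
  -- x is a periodic point
  have hiter : ∀ t : ℕ, (⇑σ)^[t] x = (σ ^ t) x := fun t => rfl
  have hmemY : ∀ t : ℕ, (σ ^ t) x ∈ Y := fun t => perm_pow_mem σ Y hinv t x hx
  have hninj : ¬ Function.Injective (fun t : ℕ => (σ ^ t) x) := by
    intro h
    exact (Set.infinite_of_injective_forall_mem h (fun t => hmemY t)) hfin
  have hper : x ∈ Function.periodicPts ⇑σ := by
    rw [Function.Injective] at hninj
    push_neg at hninj
    obtain ⟨u, v, huv, hne⟩ := hninj
    rcases lt_or_gt_of_ne hne with h | h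
    · refine ⟨v - u, by omega, ?_⟩
      have : (σ ^ u) ((σ ^ (v - u)) x) = (σ ^ u) x := by
        rw [← Equiv.Perm.mul_apply, ← pow_add]
        rw [show u + (v - u) = v by omega]
        exact huv.symm
      have := (σ ^ u).injective this
      simpa [Function.IsPeriodicPt, Function.IsFixedPt, hiter] using this
    · refine ⟨u - v, by omega, ?_⟩
      have : (σ ^ v) ((σ ^ (u - v)) x) = (σ ^ v) x := by
        rw [← Equiv.Perm.mul_apply, ← pow_add]
        rw [show v + (u - v) = u by omega]
        exact huv
      have := (σ ^ v).injective this
      simpa [Function.IsPeriodicPt, Function.IsFixedPt, hiter] using this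
  have hppos : 0 < Function.minimalPeriod ⇑σ x :=
    Function.minimalPeriod_pos_of_mem_periodicPts hper
  set p := Function.minimalPeriod ⇑σ x with hp
  -- Y = image of Iio p
  have himg : Y = (fun t : ℕ => (σ ^ t) x) '' (Set.Iio p) := by
    apply Set.Subset.antisymm
    · intro y hy
      obtain ⟨t, ht⟩ := htrans x hx y hy
      refine ⟨t % p, Nat.mod_lt _ hppos, ?_⟩
      show (σ ^ (t % p)) x = y
      rw [show (σ ^ (t % p)) x = (⇑σ)^[t % p] x from rfl, hp,
        Function.iterate_mod_minimalPeriod_eq]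
      exact ht
    · rintro y ⟨t, _, rfl⟩
      exact hmemY t
  have hinjOn : Set.InjOn (fun t : ℕ => (σ ^ t) x) (Set.Iio p) := by
    have := Function.iterate_injOn_Iio_minimalPeriod (f := ⇑σ) (x := x)
    simpa [hiter] using this
  have : Y.ncard = p := by
    rw [himg, Set.ncard_image_of_injOn hinjOn]
    rw [show (Set.Iio p) = ↑(Finset.Iio p) by simp, Set.ncard_coe_finset, Nat.card_Iio]
  omega

private lemma perm_pow_eq_iff {α : Type*} (σ : Equiv.Perm α) (m : ℕ) (hm : 0 < m)
    (x : α) (hp : Function.minimalPeriod ⇑σ x = m) (u v : ℕ) :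
    (σ ^ u) x = (σ ^ v) x ↔ u % m = v % m := by
  have hiter : ∀ t : ℕ, (⇑σ)^[t] x = (σ ^ t) x := fun t => rfl
  have hmod : ∀ t : ℕ, (σ ^ (t % m)) x = (σ ^ t) x := by
    intro t
    rw [← hiter, ← hiter, ← hp, Function.iterate_mod_minimalPeriod_eq]
  constructor
  · intro h
    have hinjOn : Set.InjOn (fun t : ℕ => (σ ^ t) x) (Set.Iio m) := by
      have := Function.iterate_injOn_Iio_minimalPeriod (f := ⇑σ) (x := x)
      rw [hp] at this
      simpa [hiter] using this
    exact hinjOn (Nat.mod_lt _ hm) (Nat.mod_lt _ hm) (by simpa only [hmod] using h)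
  · intro h
    rw [← hmod u, ← hmod v, h]

theorem pow_stabilizes_union_of_orbits_iff (α : Type*) (m l : ℕ) (hm : 0 < m) (hl : 0 < l)
    (a : Fin l → ℕ) (ha : ∀ j, 0 < a j ∧ a j ∣ m)
    (Y : Fin l → Set α) (hfin : ∀ j, (Y j).Finite) (hcard : ∀ j, (Y j).ncard = m)
    (hdisj : Pairwise (Function.onFun Disjoint Y))
    (σ : Equiv.Perm α)
    (hinv : ∀ j, ∀ x ∈ Y j, σ x ∈ Y j)
    (htrans : ∀ j, ∀ x ∈ Y j, ∀ y ∈ Y j, ∃ t : ℕ, (σ ^ t) x = y)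
    (L : Set α) (hL : L ⊆ ⋃ j, Y j)
    (horb : ∀ j, ∃ x ∈ Y j,
      L ∩ Y j = {y | ∃ t : ℕ, ((σ ^ (m / a j)) ^ t) x = y}) :
    ∀ s : ℕ, ((σ ^ s) '' L = L ↔ (m / Finset.univ.gcd a) ∣ s) := by
  intro s
  -- notation
  set g := Finset.univ.gcd a with hg
  have hgd : ∀ j, g ∣ a j := fun j => Finset.gcd_dvd (Finset.mem_univ j)
  obtain ⟨j0⟩ : Nonempty (Fin l) := ⟨⟨0, hl⟩⟩
  have hgpos : 0 < g := by
    rcases Nat.eq_zero_or_pos g with h | h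
    · exfalso; have := hgd j0; rw [h] at this; have := Nat.eq_zero_of_zero_dvd this
      exact absurd this (ha j0).1.ne'
    · exact h
  have hgm : g ∣ m := (hgd j0).trans (ha j0).2
  -- choose base points
  choose x hxY hxL using horb
  -- per-block facts
  have hmp : ∀ j, Function.minimalPeriod ⇑σ (x j) = m := fun j =>
    perm_minimalPeriod σ (Y j) m hm (hfin j) (hcard j) (hinv j) (htrans j) (x j) (hxY j)
  have hLj : ∀ j, L ∩ Y j = {y | ∃ t : ℕ, (σ ^ (m / a j * t)) (x j) = y} := by
    intro j
    rw [hxL j]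
    ext y; simp [← pow_mul]
  -- L is the union of the pieces
  have hLU : L = ⋃ j, L ∩ Y j := by
    ext y; constructor
    · intro hy
      obtain ⟨Yj, ⟨j, rfl⟩, hyj⟩ := hL hy
      exact Set.mem_iUnion.2 ⟨j, hy, hyj⟩
    · intro hy
      obtain ⟨_, ⟨j, rfl⟩, hyj, _⟩ := hy
      exact hyj
  -- key per-block equivalence
  have hkey : ∀ j, ((σ ^ s) '' (L ∩ Y j) = L ∩ Y j) ↔ (m / a j) ∣ s := by
    intro j
    obtain ⟨haj, hajm⟩ := ha j
    have hdm : (m / a j) ∣ m := Nat.div_dvd_of_dvd hajm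
    have hda : m / a j * a j = m := Nat.div_mul_cancel hajm
    constructor
    · intro h
      have hxmem : x j ∈ L ∩ Y j := by
        rw [hLj j]; exact ⟨0, by simp⟩
      have : (σ ^ s) (x j) ∈ L ∩ Y j := h ▸ Set.mem_image_of_mem _ hxmem
      rw [hLj j] at this
      obtain ⟨t, ht⟩ := this
      have := (perm_pow_eq_iff σ m hm (x j) (hmp j) _ _).1 ht
      -- m / a j ∣ (m/a j * t) % m = s % m, hence ∣ s
      have h1 : (m / a j) ∣ (m / a j * t) % m := (Nat.dvd_mod_iff hdm).2 ⟨t, rfl⟩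
      rw [this] at h1
      exact (Nat.dvd_mod_iff hdm).1 h1
    · rintro ⟨q, rfl⟩
      rw [hLj j]
      ext y
      simp only [Set.mem_image, Set.mem_setOf_eq]
      constructor
      · rintro ⟨z, ⟨t, rfl⟩, rfl⟩
        exact ⟨q + t, by rw [← Equiv.Perm.mul_apply, ← pow_add]; ring_nf⟩
      · rintro ⟨t, rfl⟩
        refine ⟨(σ ^ (m / a j * (t + q * (a j - 1)))) (x j), ⟨_, rfl⟩, ?_⟩
        rw [← Equiv.Perm.mul_apply, ← pow_add]
        apply (perm_pow_eq_iff σ m hm (x j) (hmp j) _ _).2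
        have : m / a j * q + m / a j * (t + q * (a j - 1)) = m / a j * t + m * q := by
          obtain ⟨A', hA'⟩ : ∃ A', a j = A' + 1 := ⟨a j - 1, by omega⟩
          generalize hdeq : m / a j = d at hda ⊢
          rw [← hda, hA']
          simp only [Nat.add_sub_cancel]
          ring
        rw [this, Nat.add_mul_mod_self_left]
  -- reduce global statement to per-block
  have hYinv : ∀ j, ∀ z ∈ Y j, (σ ^ s) z ∈ Y j := fun j => perm_pow_mem σ (Y j) (hinv j) s
  have hglobal : ((σ ^ s) '' L = L) ↔ ∀ j, (σ ^ s) '' (L ∩ Y j) = L ∩ Y j := by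
    constructor
    · intro h j
      have hsub : (σ ^ s) '' (L ∩ Y j) ⊆ L ∩ Y j := by
        rintro _ ⟨z, ⟨hzL, hzY⟩, rfl⟩
        exact ⟨h ▸ Set.mem_image_of_mem _ hzL, hYinv j z hzY⟩
      refine Set.eq_of_subset_of_ncard_le hsub ?_ ((hfin j).subset Set.inter_subset_right)
      rw [Set.ncard_image_of_injective _ (σ ^ s).injective]
    · intro h
      rw [hLU, Set.image_iUnion]
      exact Set.iUnion_congr h
  rw [hglobal]
  -- arithmetic: (∀ j, m / a j ∣ s) ↔ m / g ∣ s
  have harith : (∀ j, (m / a j) ∣ s) ↔ (m / g) ∣ s := by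
    constructor
    · intro h
      rw [Nat.div_dvd_iff_dvd_mul hgm hgpos]
      have : (Finset.univ.gcd fun j => s * a j) = s * g := by
        rw [hg, Finset.gcd_mul_left]
        simp
      rw [show g * s = s * g by ring, ← this]
      apply Finset.dvd_gcd
      intro j _
      have := (h j)
      rw [Nat.div_dvd_iff_dvd_mul (ha j).2 (ha j).1] at this
      exact this.trans ⟨1, by ring⟩
    · intro h j
      rw [Nat.div_dvd_iff_dvd_mul (ha j).2 (ha j).1]
      rw [Nat.div_dvd_iff_dvd_mul hgm hgpos] at h
      calc m ∣ g * s := h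
        _ ∣ a j * s := Nat.mul_dvd_mul_right (hgd j) s
  rw [← harith]
  exact forall_congr' hkey
end
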